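/- arXiv:1508.03003 — 2 statements merged into one kernel-verified Lean document; each statement's English description precedes it below -/
import Mathlib

section
/- Suppose the divisor X = {(λ, m_λ)}_{λ∈Λ} has the property that for every C > 0 there is a compact set K ⊂ ℂ with ⋃_{λ∈Λ, m_λ>αC²} D(λ, sqrt(m_λ/α) − C) = ℂ \ K. Then there exists a subset Λ₁ ⊂ Λ such that (i) for every C > 0 there is a compact K with ⋃_{λ∈Λ₁, m_λ>αC²} D(λ, sqrt(m_λ/α) − C) = ℂ \ K, and (ii) m_λ → ∞ as |λ| → ∞ along λ ∈ Λ₁. -/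
open Complex MeasureTheory Metric

noncomputable section

/-- Squared Fock norm: (α/π) ∫ |f|² e^{-α|z|²}. -/
def fockNorm2 (α : ℝ) (f : ℂ → ℂ) : ℝ :=
  (α / Real.pi) * ∫ z : ℂ, ‖f z‖ ^ 2 * Real.exp (-α * ‖z‖ ^ 2)

/-- Membership in the Fock space F_α². -/
def memFock (α : ℝ) (f : ℂ → ℂ) : Prop :=
  Differentiable ℂ f ∧
  MeasureTheory.Integrable
    (fun z : ℂ => ‖f z‖ ^ 2 * Real.exp (-α * ‖z‖ ^ 2))

/-- Fock inner product. -/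
def fockInner (α : ℝ) (f g : ℂ → ℂ) : ℂ :=
  ((α / Real.pi : ℝ) : ℂ) *
    ∫ z : ℂ, f z * (starRingEnd ℂ) (g z) * (Real.exp (-α * ‖z‖ ^ 2) : ℝ)

/-- The normalized monomials e_k(z) = √(αᵏ/k!) zᵏ. -/
def fockE (α : ℝ) (k : ℕ) (z : ℂ) : ℂ :=
  (Real.sqrt (α ^ k / Nat.factorial k) : ℝ) * z ^ k

/-- The translation operator T_l. -/
def fockT (α : ℝ) (l : ℂ) (f : ℂ → ℂ) (ζ : ℂ) : ℂ :=
  Complex.exp ((α : ℂ) * (starRingEnd ℂ) l * ζ - ((α / 2 : ℝ) : ℂ) * (‖l‖ ^ 2 : ℝ)) *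
    f (ζ - l)

/-- Radius √(m_λ/α) associated to the point λ. -/
def discR (α : ℝ) (m : ℂ → ℕ) (l : ℂ) : ℝ := Real.sqrt ((m l : ℝ) / α)

/-- Finite overlap condition. -/
def FiniteOverlap (α : ℝ) (Λ : Set ℂ) (m : ℂ → ℕ) : Prop :=
  ∃ N : ℕ, ∀ z : ℂ,
    ({l | l ∈ Λ ∧ z ∈ Metric.ball l (discR α m l)}).Finite ∧
    ({l | l ∈ Λ ∧ z ∈ Metric.ball l (discR α m l)}).ncard ≤ N

/-- The sampling sum Σ_{λ∈Λ} Σ_{k<m_λ} |⟨f, T_λ e_k⟩|². -/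
def samplingSum (α : ℝ) (Λ : Set ℂ) (m : ℂ → ℕ) (f : ℂ → ℂ) : ℝ :=
  ∑' l : Λ, ∑ k ∈ Finset.range (m l), ‖fockInner α f (fockT α l (fockE α k))‖ ^ 2

/-- X = (Λ, m) is a sampling divisor for F_α². -/
def SamplingDiv (α : ℝ) (Λ : Set ℂ) (m : ℂ → ℕ) : Prop :=
  ∃ c C : ℝ, 0 < c ∧ c ≤ C ∧ ∀ f : ℂ → ℂ, memFock α f →
    (c * fockNorm2 α f ≤ samplingSum α Λ m f ∧ samplingSum α Λ m f ≤ C * fockNorm2 α f)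

/-- X = (Λ, m) is an interpolating divisor for F_α². -/
def InterpolatingDiv (α : ℝ) (Λ : Set ℂ) (m : ℂ → ℕ) : Prop :=
  ∀ v : ℂ → ℕ → ℂ,
    Summable (fun l : Λ => ∑ k ∈ Finset.range (m l), ‖v l k‖ ^ 2) →
    ∃ f : ℂ → ℂ, memFock α f ∧
      ∀ l ∈ Λ, ∀ k < m l, fockInner α f (fockT α l (fockE α k)) = v l k

/-- f vanishes at l to order at least n. -/
def VanishesTo (f : ℂ → ℂ) (l : ℂ) (n : ℕ) : Prop :=
  ∀ j < n, iteratedDeriv j f l = 0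

theorem sublambda_with_multiplicities_to_infty (α : ℝ) (hα : 0 < α)
    (Λ : Set ℂ) (m : ℂ → ℕ) (hm : ∀ l ∈ Λ, 1 ≤ m l)
    (hfo : FiniteOverlap α Λ m)
    (hcover : ∀ C : ℝ, 0 < C → ∃ K : Set ℂ, IsCompact K ∧
      {z : ℂ | ∃ l ∈ Λ, α * C ^ 2 < (m l : ℝ) ∧ z ∈ Metric.ball l (discR α m l - C)} = Kᶜ) :
    ∃ Λ₁ ⊆ Λ,
      (∀ C : ℝ, 0 < C → ∃ K : Set ℂ, IsCompact K ∧
        {z : ℂ | ∃ l ∈ Λ₁, α * C ^ 2 < (m l : ℝ) ∧ z ∈ Metric.ball l (discR α m l - C)} = Kᶜ) ∧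
      (∀ M : ℕ, ∃ R : ℝ, ∀ l ∈ Λ₁, R < ‖l‖ → M < m l) := by
  classical
  -- choose compact sets for C = n+1
  have hK' : ∀ n : ℕ, ∃ K : Set ℂ, IsCompact K ∧
      {z : ℂ | ∃ l ∈ Λ, α * ((n : ℝ) + 1) ^ 2 < (m l : ℝ) ∧
        z ∈ Metric.ball l (discR α m l - ((n : ℝ) + 1))} = Kᶜ :=
    fun n => hcover ((n : ℝ) + 1) (by positivity)
  choose K hKc hKeq using hK'
  choose ρ hρ using fun n => (hKc n).isBounded.subset_closedBall 0
  set g : ℕ → ℝ := fun n => (Finset.range (n + 1)).sup' (by simp) (fun k => max (ρ k) 0)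
    with hgdef
  set S : ℕ → ℝ := fun n => (n : ℝ) + g n with hSdef
  have hgmono : ∀ a b : ℕ, a ≤ b → g a ≤ g b := by
    intro a b hab
    exact Finset.sup'_mono _ (Finset.range_subset_range.mpr (by omega)) (by simp)
  have hgnn : ∀ n : ℕ, 0 ≤ g n := by
    intro n
    exact le_trans (le_max_right (ρ 0) 0)
      (Finset.le_sup' (fun k => max (ρ k) 0) (by simp : 0 ∈ Finset.range (n + 1)))
  have hSmono : ∀ a b : ℕ, a ≤ b → S a ≤ S b := by
    intro a b hab
    have h1 : (a : ℝ) ≤ b := by exact_mod_cast hab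
    have h2 := hgmono a b hab
    simp only [hSdef]; linarith
  have hρS : ∀ n : ℕ, ρ n ≤ S n := by
    intro n
    have h1 : ρ n ≤ g n :=
      le_trans (le_max_left (ρ n) 0)
        (Finset.le_sup' (fun k => max (ρ k) 0) (by simp : n ∈ Finset.range (n + 1)))
    have h2 : (0 : ℝ) ≤ n := Nat.cast_nonneg n
    simp only [hSdef]; linarith
  have hnS : ∀ n : ℕ, (n : ℝ) ≤ S n := by
    intro n
    have := hgnn n
    simp only [hSdef]; linarith
  set Λ₁ : Set ℂ := {l | l ∈ Λ ∧ ∃ n : ℕ, α * ((n : ℝ) + 1) ^ 2 < (m l : ℝ) ∧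
    ∃ z : ℂ, z ∈ Metric.ball l (discR α m l - ((n : ℝ) + 1)) ∧
      S n < ‖z‖ ∧ ‖z‖ ≤ S (n + 1)} with hΛ₁
  have key : ∀ (z : ℂ) (n : ℕ), S n < ‖z‖ → ‖z‖ ≤ S (n + 1) →
      ∃ l, l ∈ Λ₁ ∧ α * ((n : ℝ) + 1) ^ 2 < (m l : ℝ) ∧
        z ∈ Metric.ball l (discR α m l - ((n : ℝ) + 1)) := by
    intro z n h1 h2
    have hzK : z ∉ K n := by
      intro hz
      have h3 := hρ n hz
      simp only [Metric.mem_closedBall, Complex.dist_eq, sub_zero] at h3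
      have := hρS n
      linarith
    have hzset : z ∈ {z : ℂ | ∃ l ∈ Λ, α * ((n : ℝ) + 1) ^ 2 < (m l : ℝ) ∧
        z ∈ Metric.ball l (discR α m l - ((n : ℝ) + 1))} := by
      rw [hKeq n]; exact hzK
    obtain ⟨l, hlΛ, hml, hball⟩ := hzset
    exact ⟨l, ⟨hlΛ, n, hml, z, hball, h1, h2⟩, hml, hball⟩
  have annulus : ∀ (z : ℂ) (n₀ : ℕ), S n₀ < ‖z‖ →
      ∃ n : ℕ, n₀ ≤ n ∧ S n < ‖z‖ ∧ ‖z‖ ≤ S (n + 1) := by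
    intro z n₀ h
    set b := ⌈‖z‖⌉₊ with hb
    have hbd : ∀ k : ℕ, S k < ‖z‖ → k ≤ b := by
      intro k hk
      have : (k : ℝ) < ‖z‖ := lt_of_le_of_lt (hnS k) hk
      exact (Nat.lt_ceil.mpr this).le
    set n := Nat.findGreatest (fun k => S k < ‖z‖) b with hn
    have hge : n₀ ≤ n := Nat.le_findGreatest (hbd n₀ h) h
    have hPn : S n < ‖z‖ :=
      Nat.findGreatest_spec (P := fun k => S k < ‖z‖) (hbd n₀ h) h
    have hupper : ‖z‖ ≤ S (n + 1) := by
      by_cases hc : n + 1 ≤ b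
      · have := Nat.findGreatest_is_greatest (P := fun k => S k < ‖z‖)
          (n := b) (Nat.lt_succ_self n) hc
        exact not_lt.mp this
      · have hbn : b ≤ n := by omega
        have h1 : ‖z‖ ≤ (b : ℝ) := Nat.le_ceil _
        have h2 : (b : ℝ) ≤ (n : ℝ) := by exact_mod_cast hbn
        have h3 := hnS n
        linarith
    exact ⟨n, hge, hPn, hupper⟩
  have hsubΛ : Λ₁ ⊆ Λ := fun l hl => hl.1
  clear_value Λ₁ S g
  refine ⟨Λ₁, hsubΛ, ?_, ?_⟩
  · intro C hC
    set n₀ := ⌈C⌉₊ with hn₀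
    set T := {z : ℂ | ∃ l ∈ Λ₁, α * C ^ 2 < (m l : ℝ) ∧
      z ∈ Metric.ball l (discR α m l - C)} with hT
    have hTopen : IsOpen T := by
      have hTe : T = ⋃ l ∈ {l : ℂ | l ∈ Λ₁ ∧ α * C ^ 2 < (m l : ℝ)},
          Metric.ball l (discR α m l - C) := by
        ext z
        simp only [hT, Set.mem_setOf_eq, Set.mem_iUnion]
        tauto
      rw [hTe]
      exact isOpen_biUnion fun _ _ => isOpen_ball
    have hsub : Tᶜ ⊆ Metric.closedBall 0 (S n₀) := by
      intro z hz
      by_contra hz'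
      apply hz
      have hzabs : S n₀ < ‖z‖ := by
        simp only [Metric.mem_closedBall, Complex.dist_eq, sub_zero, not_le] at hz'
        exact hz'
      obtain ⟨n, hn0n, h1, h2⟩ := annulus z n₀ hzabs
      obtain ⟨l, hlΛ₁, hml, hball⟩ := key z n h1 h2
      have hCn : C ≤ (n : ℝ) + 1 := by
        have h5 : C ≤ (n₀ : ℝ) := Nat.le_ceil C
        have h6 : (n₀ : ℝ) ≤ (n : ℝ) := by exact_mod_cast hn0n
        linarith
      refine ⟨l, hlΛ₁, ?_, ?_⟩
      · have h7 : C ^ 2 ≤ ((n : ℝ) + 1) ^ 2 := by nlinarith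
        have h8 := mul_le_mul_of_nonneg_left h7 hα.le
        linarith
      · exact Metric.ball_subset_ball (by linarith) hball
    exact ⟨Tᶜ, (isCompact_closedBall 0 (S n₀)).of_isClosed_subset
      (isClosed_compl_iff.mpr hTopen) hsub, (compl_compl T).symm⟩
  · intro M
    refine ⟨S ⌈Real.sqrt ((M : ℝ) / α)⌉₊ + Real.sqrt ((M : ℝ) / α), ?_⟩
    intro l hl hR
    by_contra hle
    push_neg at hle
    rw [hΛ₁] at hl
    obtain ⟨hlΛ, n, hml, z, hball, hz1, hz2⟩ := hl
    have hMl : (m l : ℝ) ≤ (M : ℝ) := by exact_mod_cast hle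
    have h1 : ((n : ℝ) + 1) ^ 2 ≤ (M : ℝ) / α := by
      rw [le_div_iff₀ hα]
      nlinarith
    have h2 : ((n : ℝ) + 1) ≤ Real.sqrt ((M : ℝ) / α) := by
      rw [show ((n : ℝ) + 1) = Real.sqrt (((n : ℝ) + 1) ^ 2) from
        (Real.sqrt_sq (by positivity)).symm]
      exact Real.sqrt_le_sqrt h1
    have hnN : n + 1 ≤ ⌈Real.sqrt ((M : ℝ) / α)⌉₊ := by
      have h3 := h2.trans (Nat.le_ceil _)
      exact_mod_cast h3
    have hrl : discR α m l ≤ Real.sqrt ((M : ℝ) / α) := by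
      unfold discR
      exact Real.sqrt_le_sqrt (by gcongr)
    have hdist : dist z l < discR α m l - ((n : ℝ) + 1) := Metric.mem_ball.mp hball
    have habs : ‖l‖ ≤ dist z l + ‖z‖ := by
      have h := dist_triangle l z 0
      simp only [Complex.dist_eq, sub_zero] at h
      rw [show ‖l - z‖ = dist z l by
        rw [Complex.dist_eq]; exact norm_sub_rev l z] at h
      exact h
    have hS1 : S (n + 1) ≤ S ⌈Real.sqrt ((M : ℝ) / α)⌉₊ := hSmono _ _ hnN
    have hn0 : (0 : ℝ) ≤ (n : ℝ) := Nat.cast_nonneg n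
    linarith
end
end

section
/- If the discs D(λ, sqrt(m_λ/α) + C), λ ∈ Λ, are pairwise disjoint for some C > 0, and m_λ → ∞ as |λ| → ∞, then for every R > 0 the set of λ ∈ Λ with sqrt(m_λ/α) ≥ |λ| − R is finite. Consequently the union ⋃_{λ∈Λ} D(λ, sqrt(m_λ/α)) cannot equal ℂ \ K for any compact K. -/
open Complex MeasureTheory Metric

noncomputable section

lemma center_spec (r : ℝ) (hr : 0 ≤ r) (l : ℂ) :
    ∃ p : ℂ, dist p l ≤ r ∧ ‖p‖ = max (‖l‖ - r) 0 := by
  by_cases hl : l = 0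
  · refine ⟨0, by simpa [hl] using hr, ?_⟩
    rw [hl, norm_zero, zero_sub, max_eq_right (by linarith)]
  · have ha : (0:ℝ) < ‖l‖ := norm_pos_iff.mpr hl
    set a := ‖l‖ with haa
    set t := min a r with ht
    have ht0 : 0 ≤ t := le_min ha.le hr
    have hta : t ≤ a := min_le_left _ _
    refine ⟨((1 - t / a : ℝ) : ℂ) * l, ?_, ?_⟩
    · have h1 : ((1 - t / a : ℝ) : ℂ) * l - l = ((-(t / a) : ℝ) : ℂ) * l := by
        push_cast; ring
      rw [dist_eq, h1, norm_mul, Complex.norm_real, Real.norm_eq_abs, abs_neg,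
        _root_.abs_of_nonneg (div_nonneg ht0 ha.le), ← haa,
        div_mul_cancel₀ _ ha.ne']
      exact min_le_right _ _
    · rw [norm_mul, Complex.norm_real, Real.norm_eq_abs, ← haa,
        _root_.abs_of_nonneg (by rw [sub_nonneg]; exact div_le_one_of_le₀ hta ha.le),
        sub_mul, one_mul, div_mul_cancel₀ _ ha.ne']
      rcases le_total a r with h | h
      · rw [ht, min_eq_left h, max_eq_right (by linarith), sub_self]
      · rw [ht, min_eq_right h, max_eq_left (by linarith)]

lemma outer_point (r : ℝ) (hr : 0 ≤ r) (l : ℂ) :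
    ∃ z : ℂ, dist z l = r ∧ ‖z‖ = ‖l‖ + r := by
  by_cases hl : l = 0
  · refine ⟨(r : ℂ), ?_, ?_⟩
    · rw [hl, dist_zero_right, Complex.norm_real, Real.norm_eq_abs,
        _root_.abs_of_nonneg hr]
    · rw [hl, norm_zero, zero_add, Complex.norm_real, Real.norm_eq_abs, _root_.abs_of_nonneg hr]
  · have ha : (0:ℝ) < ‖l‖ := norm_pos_iff.mpr hl
    refine ⟨((1 + r / ‖l‖ : ℝ) : ℂ) * l, ?_, ?_⟩
    · have h1 : ((1 + r / ‖l‖ : ℝ) : ℂ) * l - l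
          = ((r / ‖l‖ : ℝ) : ℂ) * l := by push_cast; ring
      rw [dist_eq, h1, norm_mul, Complex.norm_real, Real.norm_eq_abs,
        _root_.abs_of_nonneg (div_nonneg hr ha.le), div_mul_cancel₀ _ ha.ne']
    · rw [norm_mul, Complex.norm_real, Real.norm_eq_abs, _root_.abs_of_nonneg (by positivity),
        add_mul, one_mul, div_mul_cancel₀ _ ha.ne']

theorem disjoint_and_mult_to_infty_incompatible_with_cover (α : ℝ) (hα : 0 < α)
    (Λ : Set ℂ) (m : ℂ → ℕ) (hm : ∀ l ∈ Λ, 1 ≤ m l)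
    (C : ℝ) (hC : 0 < C)
    (hdisj : ∀ l₁ ∈ Λ, ∀ l₂ ∈ Λ, l₁ ≠ l₂ →
      Disjoint (Metric.ball l₁ (discR α m l₁ + C)) (Metric.ball l₂ (discR α m l₂ + C)))
    (hmult : ∀ M : ℕ, ∃ R : ℝ, ∀ l ∈ Λ, R < ‖l‖ → M < m l) :
    (∀ R : ℝ, 0 < R → ({l | l ∈ Λ ∧ ‖l‖ - R ≤ discR α m l}).Finite) ∧
    (∀ K : Set ℂ, IsCompact K → (⋃ l ∈ Λ, Metric.ball l (discR α m l)) ≠ Kᶜ) := by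
  have hr0 : ∀ l, 0 ≤ discR α m l := fun l => Real.sqrt_nonneg _
  constructor
  · intro R hR
    set S := {l | l ∈ Λ ∧ ‖l‖ - R ≤ discR α m l} with hS
    have hP : ∀ l : ℂ, ∃ p : ℂ, dist p l ≤ discR α m l ∧
        ‖p‖ = max (‖l‖ - discR α m l) 0 :=
      fun l => center_spec _ (hr0 l) l
    choose P hP1 hP2 using hP
    have hPR : ∀ l ∈ S, ‖P l‖ ≤ R := by
      intro l hl
      rw [hP2 l]
      exact max_le (by linarith [hl.2]) hR.le
    set As : S → Set ℂ := fun i => Metric.ball (P i) C with hAs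
    have hsub : ∀ i : S, As i ⊆ Metric.ball (i : ℂ) (discR α m i + C) := by
      intro i x hx
      rw [hAs] at hx
      rw [Metric.mem_ball] at hx ⊢
      calc dist x (i:ℂ) ≤ dist x (P i) + dist (P i) (i:ℂ) := dist_triangle _ _ _
        _ < C + discR α m i := add_lt_add_of_lt_of_le hx (hP1 (i : ℂ))
        _ = discR α m i + C := by ring
    have hdisj' : Pairwise (Function.onFun Disjoint As) := by
      intro i j hij
      have hne : (i : ℂ) ≠ (j : ℂ) := fun h => hij (Subtype.ext h)
      exact ((hdisj i i.2.1 j j.2.1 hne).mono (hsub i) (hsub j))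
    have hunion : volume (⋃ i, As i) ≠ ⊤ := by
      refine ne_of_lt (lt_of_le_of_lt (measure_mono ?_)
        (measure_ball_lt_top (x := (0:ℂ)) (r := C + R)))
      rintro x hx
      obtain ⟨i, hi⟩ := Set.mem_iUnion.1 hx
      rw [hAs] at hi
      rw [mem_ball] at hi ⊢
      have hPi : dist (P i) 0 ≤ R := by
        rw [dist_zero_right]
        exact hPR i i.2
      calc dist x 0 ≤ dist x (P i) + dist (P i) 0 := dist_triangle _ _ _
        _ < C + R := add_lt_add_of_lt_of_le hi hPi
    have hε : ∀ i : S, volume (Metric.ball (0:ℂ) C) ≤ volume (As i) := by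
      intro i
      exact (Measure.addHaar_ball_center volume (P (i:ℂ)) C).ge
    have hpos : (0 : ENNReal) < volume (Metric.ball (0:ℂ) C) := measure_ball_pos _ _ hC
    have hfin := MeasureTheory.Measure.finite_const_le_meas_of_disjoint_iUnion
      volume hpos (fun i => measurableSet_ball) hdisj' hunion
    have huniv : {i : S | volume (Metric.ball (0:ℂ) C) ≤ volume (As i)} = Set.univ := by
      ext i; simpa using hε i
    rw [huniv] at hfin
    have : Finite S := Set.finite_univ_iff.mp hfin
    exact Set.toFinite S
  · intro K hK heq
    obtain ⟨R₀, hR₀⟩ := hK.isBounded.subset_closedBall 0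
    set z₀ : ℂ := ((max R₀ 0 + 1 : ℝ) : ℂ) with hz₀
    have habs : ‖z₀‖ = max R₀ 0 + 1 := by
      rw [hz₀, Complex.norm_real, Real.norm_eq_abs, _root_.abs_of_nonneg (by positivity)]
    have hz₀big : R₀ < ‖z₀‖ := by
      rw [habs]; have := le_max_left R₀ 0; linarith
    have hz₀K : z₀ ∉ K := by
      intro h
      have := hR₀ h
      rw [mem_closedBall, dist_zero_right] at this
      linarith
    have hz₀U : z₀ ∈ ⋃ l ∈ Λ, Metric.ball l (discR α m l) := by
      rw [heq]; exact hz₀K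
    obtain ⟨l, hlΛ, hzl⟩ := by simpa using hz₀U
    obtain ⟨z, hz1, hz2⟩ := outer_point (discR α m l) (hr0 l) l
    have hzU : z ∉ ⋃ l' ∈ Λ, Metric.ball l' (discR α m l') := by
      intro h
      obtain ⟨l', hl', hzl'⟩ := by simpa using h
      by_cases hll : l' = l
      · subst hll
        rw [hz1] at hzl'
        exact lt_irrefl _ hzl'
      · have h1 : z ∈ Metric.ball l (discR α m l + C) := by
          rw [mem_ball, hz1]; linarith
        have h2 : z ∈ Metric.ball l' (discR α m l' + C) := by
          rw [mem_ball]; linarith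
        exact (hdisj l' hl' l hlΛ hll).ne_of_mem h2 h1 rfl
    have hzK : z ∈ K := by
      by_contra h
      exact hzU (heq ▸ (h : z ∈ Kᶜ))
    have h1 : ‖z‖ ≤ R₀ := by
      have := hR₀ hzK
      rwa [mem_closedBall, dist_zero_right] at this
    have h2 : ‖z₀‖ < ‖l‖ + discR α m l := by
      rw [Complex.dist_eq] at hzl
      have h3 : ‖z₀‖ ≤ ‖z₀ - l‖ + ‖l‖ := by
        simpa using norm_add_le (z₀ - l) l
      linarith
    rw [← hz2] at h2
    linarith
end
end
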